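/- Let M be a Kripke-estit model and M^T its associated branching-time model. For every cell L in Choice_α at the class of w and every moment in the associated tree: L is optimal with respect to the dominance ordering defined via states in M if and only if the corresponding set L^T = {h_v : v ∈ L} of histories is optimal with respect to the dominance ordering in M^T, where the value of history h_v equals the value of v. -/
import Mathlib


/-- The `R_α`-choice cell of `v`. -/
def cellW {W Ags : Type} (Ract : Ags → W → W → Prop) (a : Ags) (v : W) :
    Set W := {u | Ract a v u}

/-- The choice cells of agent `a` at the `R_□`-class of `w`. -/
def cellsW {W Ags : Type} (Rbox : W → W → Prop) (Ract : Ags → W → W → Prop)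
    (a : Ags) (w : W) : Set (Set W) :=
  {C | ∃ v, Rbox w v ∧ C = cellW Ract a v}

/-- A state for agent `a` at the class of `w`: an intersection of the other
agents' choice cells, given by a selection function `s`. -/
def isStateW {W Ags : Type} (Rbox : W → W → Prop) (Ract : Ags → W → W → Prop)
    (a : Ags) (w : W) (S : Set W) : Prop :=
  ∃ s : Ags → W, (∀ b, Rbox w (s b)) ∧
    S = {u | ∀ b, b ≠ a → Ract b (s b) u}

/-- Dominance relativized to states: `L ⪯ N` iff for every state `S`, every
element of `L ∩ S` has value at most every element of `N ∩ S`. -/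
def domV {X : Type} (Value : X → ℝ) (States : Set (Set X)) (L N : Set X) :
    Prop :=
  ∀ S ∈ States, ∀ x ∈ L ∩ S, ∀ y ∈ N ∩ S, Value x ≤ Value y

/-- Strict dominance. -/
def sdomV {X : Type} (Value : X → ℝ) (States : Set (Set X)) (L N : Set X) :
    Prop :=
  domV Value States L N ∧ ¬ domV Value States N L

/-- Optimality among a family of cells. -/
def optimalV {X : Type} (Value : X → ℝ) (Cells States : Set (Set X))
    (L : Set X) : Prop :=
  ¬ ∃ N ∈ Cells, sdomV Value States L N

lemma domV_image {W H : Type} (V : W → ℝ) (e : W ≃ H) (States : Set (Set W))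
    (L N : Set W) :
    domV (fun h => V (e.symm h)) ((fun S => e '' S) '' States)
      (e '' L) (e '' N) ↔ domV V States L N := by
  constructor
  · intro hd S hS x hx y hy
    have := hd (e '' S) ⟨S, hS, rfl⟩ (e x) ⟨⟨x, hx.1, rfl⟩, ⟨x, hx.2, rfl⟩⟩
      (e y) ⟨⟨y, hy.1, rfl⟩, ⟨y, hy.2, rfl⟩⟩
    simpa using this
  · rintro hd S' ⟨S, hS, rfl⟩ x ⟨⟨x1, hx1, rfl⟩, hx2⟩ y ⟨⟨y1, hy1, rfl⟩, hy2⟩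
    obtain ⟨x2, hx2', hx2e⟩ := hx2
    obtain ⟨y2, hy2', hy2e⟩ := hy2
    have hx : x1 = x2 := e.injective hx2e.symm
    have hy : y1 = y2 := e.injective hy2e.symm
    subst hx; subst hy
    simpa using hd S hS x1 ⟨hx1, hx2'⟩ y1 ⟨hy1, hy2'⟩

/-- Optimality transfer between a Kripke-estit model and its associated
branching-time model: a cell `L` at the class of `w` is optimal iff the
corresponding set of histories `L^T = e '' L` (where `e` is the bijection
`v ↦ h_v` and `Value_O(h_v) = Value_O(v)`) is optimal for the transported
cells and states. -/
theorem statement16 {W H Ags : Type} [Fintype Ags]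
    (Rbox : W → W → Prop) (hR : Equivalence Rbox)
    (Ract : Ags → W → W → Prop) (hRa : ∀ a, Equivalence (Ract a))
    (hsub : ∀ a w v, Ract a w v → Rbox w v)
    (ValueO : W → ℝ) (e : W ≃ H)
    (a : Ags) (w v : W) (hv : Rbox w v) :
    optimalV ValueO (cellsW Rbox Ract a w)
        {S | isStateW Rbox Ract a w S} (cellW Ract a v) ↔
      optimalV (fun h => ValueO (e.symm h))
        ((fun L => e '' L) '' cellsW Rbox Ract a w)
        ((fun S => e '' S) '' {S | isStateW Rbox Ract a w S})
        (e '' cellW Ract a v) := by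
  unfold optimalV sdomV
  constructor
  · rintro hopt ⟨N', ⟨N, hN, rfl⟩, h1, h2⟩
    exact hopt ⟨N, hN, (domV_image ValueO e _ _ _).mp h1,
      fun hc => h2 ((domV_image ValueO e _ _ _).mpr hc)⟩
  · rintro hopt ⟨N, hN, h1, h2⟩
    exact hopt ⟨e '' N, ⟨N, hN, rfl⟩, (domV_image ValueO e _ _ _).mpr h1,
      fun hc => h2 ((domV_image ValueO e _ _ _).mp hc)⟩
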